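/- Let C ≤ G^n be a proper additive MDS code of cardinality |C| = |G|^k (i.e., the minimum distance of C equals n − k + 1). Then the dual code C⊥ ⊆ Ĝ^n has cardinality |G|^{n−k} and is MDS with minimum distance k + 1. -/

import Mathlib

open Finset Function

/-- Sum of all complex characters of a finite abelian group at a fixed element. -/
lemma sum_dual_eq {G : Type*} [AddCommGroup G] [Fintype G] [DecidableEq G] (g : G) :
    ∑ ψ : AddChar G ℂ, ψ g = if g = 0 then (Fintype.card G : ℂ) else 0 := by
  classical
  have h := AddChar.sum_eq_ite (AddChar.doubleDualEmb g : AddChar (AddChar G ℂ) ℂ)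
  simpa [AddChar.doubleDualEmb_eq_zero, AddChar.card_eq] using h


/-- The dual code of a set `C ⊆ Gⁿ` of words. -/
def dualCodeSet {G : Type*} [AddCommGroup G] (n : ℕ) (C : Set (Fin n → G)) :
    Set (Fin n → AddChar G ℂ) :=
  {π | ∀ c ∈ C, ∏ j, π j (c j) = 1}

/-- The Hamming weight of a tuple of characters: the number of nontrivial coordinates. -/
noncomputable def charWeight {G : Type*} [AddCommGroup G] {n : ℕ}
    (π : Fin n → AddChar G ℂ) : ℕ :=
  Nat.card {j : Fin n // π j ≠ 1}

/-- If `C ⪇ Gⁿ` is a proper additive MDS code of cardinality `|G|^k`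
(i.e. of minimum distance `n - k + 1`), then its dual `C⊥ ⊆ Ĝⁿ` has cardinality
`|G|^(n-k)` and is MDS with minimum distance `k + 1`. -/
theorem dual_of_MDS_is_MDS {G : Type*} [AddCommGroup G] [Fintype G] [DecidableEq G] [Nontrivial G]
    (n k : ℕ) (C : AddSubgroup (Fin n → G)) (hC : C ≠ ⊤)
    (hcard : Nat.card C = Fintype.card G ^ k)
    (hmin : IsLeast {w | ∃ c ∈ C, c ≠ 0 ∧ hammingNorm c = w} (n - k + 1)) :
    Nat.card (dualCodeSet n (C : Set (Fin n → G))) = Fintype.card G ^ (n - k) ∧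
    IsLeast {w | ∃ π ∈ dualCodeSet n (C : Set (Fin n → G)),
      π ≠ (fun _ => 1) ∧ charWeight π = w} (k + 1) := by
  classical
  obtain ⟨⟨c0, hc0C, hc0ne, hc0norm⟩, hLB⟩ := hmin
  set q := Fintype.card G with hqdef
  have hq1 : 1 < q := Fintype.one_lt_card
  have hq0 : (q : ℂ) ≠ 0 := Nat.cast_ne_zero.2 (by omega)
  -- basic bounds on k
  have hk1 : 1 ≤ k := by
    by_contra h
    have hk0 : k = 0 := by omega
    have : C = ⊥ := AddSubgroup.eq_bot_of_card_eq _ (by rw [hcard, hk0, pow_zero])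
    rw [this] at hc0C
    exact hc0ne (AddSubgroup.mem_bot.1 hc0C)
  have hcardPi : Nat.card (Fin n → G) = q ^ n := by
    simp [Nat.card_eq_fintype_card, Fintype.card_fun, hqdef]
  have hkn : k < n := by
    by_contra h
    push_neg at h
    have hle : Nat.card C ≤ q ^ n := hcardPi ▸ Nat.card_le_card_of_injective _ Subtype.val_injective
    have hge : q ^ n ≤ Nat.card C := by
      rw [hcard]; exact Nat.pow_le_pow_right (by omega) h
    exact hC (AddSubgroup.eq_top_of_card_eq _ (by omega))
  -- the weight lower bound for C
  have hwC : ∀ c ∈ C, c ≠ 0 → n - k + 1 ≤ hammingNorm c := fun c hc hne =>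
    hLB ⟨c, hc, hne, rfl⟩
  -- Step 1: projection of C onto any k coordinates is bijective
  have hproj : ∀ S : Finset (Fin n), S.card = k →
      Bijective (fun (c : C) (j : S) => (c : Fin n → G) j) := by
    intro S hS
    have hinj : Injective (fun (c : C) (j : S) => (c : Fin n → G) j) := by
      intro c c' h
      by_contra hne
      have hd : (c : Fin n → G) - c' ∈ C := sub_mem c.2 c'.2
      have hdne : (c : Fin n → G) - (c' : Fin n → G) ≠ 0 := by
        intro h0
        exact hne (Subtype.ext (sub_eq_zero.1 h0))
      set d : Fin n → G := (c : Fin n → G) - (c' : Fin n → G) with hddef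
      have hsub : ({j | d j ≠ 0} : Finset (Fin n)) ⊆ Sᶜ := by
        intro j hj
        simp only [mem_filter, mem_univ, true_and] at hj
        simp only [mem_compl]
        intro hjS
        apply hj
        have h1 := congrFun h (⟨j, hjS⟩ : S)
        simp only at h1
        simp only [hddef, Pi.sub_apply]
        rw [sub_eq_zero]
        exact h1
      have hwle : hammingNorm d ≤ n - k := by
        calc hammingNorm d ≤ Sᶜ.card := Finset.card_le_card hsub
        _ = n - k := by rw [Finset.card_compl, hS]; simp
      have := hwC _ hd hdne
      omega
    rw [Fintype.bijective_iff_injective_and_card]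
    refine ⟨hinj, ?_⟩
    rw [← Nat.card_eq_fintype_card, hcard, Fintype.card_fun, Fintype.card_coe, hS]
  -- the dual code as a subgroup of the (multiplicative) group of tuples of characters
  let D : Subgroup (Fin n → AddChar G ℂ) :=
    { carrier := dualCodeSet n (C : Set (Fin n → G))
      one_mem' := by intro c _; simp
      mul_mem' := by
        intro π π' hπ hπ' c hc
        have : ∀ j, (π * π') j (c j) = π j (c j) * π' j (c j) := fun j => rfl
        simp only [this, Finset.prod_mul_distrib, hπ c hc, hπ' c hc, one_mul]
      inv_mem' := by
        intro π hπ c hc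
        have : ∀ j, (π⁻¹) j (c j) = π j ((-c) j) := fun j => rfl
        simp only [this]
        exact hπ (-c) (neg_mem hc) }
  have hDmem : ∀ π, π ∈ D ↔ π ∈ dualCodeSet n (C : Set (Fin n → G)) := fun _ => Iff.rfl
  -- charWeight as a filter card
  have hcw : ∀ π : Fin n → AddChar G ℂ, charWeight π = ({j | π j ≠ 1} : Finset (Fin n)).card := by
    intro π
    rw [charWeight, Nat.card_eq_fintype_card, Fintype.card_subtype]
  -- Step 2: minimum weight of the dual is at least k + 1
  have hdualLB : ∀ π ∈ D, π ≠ 1 → k + 1 ≤ charWeight π := by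
    intro π hπ hπne
    by_contra hlt
    push_neg at hlt
    set T : Finset (Fin n) := {j | π j ≠ 1} with hTdef
    have hTk : T.card ≤ k := by rw [← hcw]; omega
    obtain ⟨S, hTS, -, hSk⟩ := Finset.exists_subsuperset_card_eq T.subset_univ hTk
      (by simpa using hkn.le)
    -- a nontrivial coordinate
    obtain ⟨j0, hj0⟩ : ∃ j, π j ≠ 1 := by
      by_contra hall
      push_neg at hall
      exact hπne (funext hall)
    have hj0T : j0 ∈ T := by simp [hTdef, hj0]
    have hj0S : j0 ∈ S := hTS hj0T
    -- compute the character sum over C in two ways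
    have h1 : ∑ c : C, ∏ j, π j ((c : Fin n → G) j) = (q : ℂ) ^ k := by
      have : ∀ c : C, ∏ j, π j ((c : Fin n → G) j) = 1 := fun c => hπ (c : Fin n → G) c.2
      rw [Finset.sum_congr rfl fun c _ => this c]
      simp [← Nat.card_eq_fintype_card, hcard]
    have h2 : ∑ c : C, ∏ j, π j ((c : Fin n → G) j) = 0 := by
      have hres : ∀ c : C, ∏ j, π j ((c : Fin n → G) j)
          = ∏ j : S, π (j : Fin n) ((c : Fin n → G) (j : Fin n)) := by
        intro c
        rw [Finset.prod_coe_sort S (fun j => π j ((c : Fin n → G) j))]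
        refine (Finset.prod_subset S.subset_univ fun j _ hjS => ?_).symm
        have : π j = 1 := by
          by_contra hne
          exact hjS (hTS (by simp [hTdef, hne]))
        rw [this]; rfl
      calc ∑ c : C, ∏ j, π j ((c : Fin n → G) j)
          = ∑ c : C, ∏ j : S, π (j : Fin n) ((c : Fin n → G) (j : Fin n)) :=
            Finset.sum_congr rfl fun c _ => hres c
        _ = ∑ x : S → G, ∏ j : S, π (j : Fin n) (x j) := by
            exact Fintype.sum_bijective _ (hproj S hSk) _ _ fun c => rfl
        _ = ∏ j : S, ∑ y : G, π (j : Fin n) y := (Fintype.prod_sum _).symm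
        _ = 0 := by
            refine Finset.prod_eq_zero (Finset.mem_univ (⟨j0, hj0S⟩ : S)) ?_
            refine AddChar.sum_eq_zero_iff_ne_zero.2 ?_
            rw [AddChar.ne_zero_iff]
            exact AddChar.ne_one_iff.1 hj0
    rw [h1] at h2
    exact pow_ne_zero k hq0 h2
  -- Step 3: cardinality of the dual
  have hDcard : Nat.card (dualCodeSet n (C : Set (Fin n → G))) = q ^ (n - k) := by
    have hinner : ∀ π : Fin n → AddChar G ℂ,
        ∑ c : C, ∏ j, π j ((c : Fin n → G) j) = if π ∈ D then ((q : ℂ)) ^ k else 0 := by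
      intro π
      by_cases hπ : π ∈ D
      · rw [if_pos hπ]
        have : ∀ c : C, ∏ j, π j ((c : Fin n → G) j) = 1 := fun c => hπ (c : Fin n → G) c.2
        rw [Finset.sum_congr rfl fun c _ => this c]
        simp [← Nat.card_eq_fintype_card, hcard]
      · rw [if_neg hπ]
        let χ : AddChar C ℂ :=
          { toFun := fun c => ∏ j, π j ((c : Fin n → G) j)
            map_zero_eq_one' := by simp
            map_add_eq_mul' := fun c c' => by
              simp only [AddSubgroup.coe_add, Pi.add_apply, AddChar.map_add_eq_mul,
                Finset.prod_mul_distrib] }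
        have hχ : χ ≠ 0 := by
          rw [AddChar.ne_zero_iff]
          simp only [hDmem, dualCodeSet, Set.mem_setOf_eq, not_forall] at hπ
          obtain ⟨c, hc, hne⟩ := hπ
          exact ⟨⟨c, hc⟩, hne⟩
        exact AddChar.sum_eq_zero_iff_ne_zero.2 hχ
    have houter : ∀ c : C, ∑ π : Fin n → AddChar G ℂ, ∏ j, π j ((c : Fin n → G) j)
        = if c = 0 then (q : ℂ) ^ n else 0 := by
      intro c
      rw [← Fintype.prod_sum (fun j (ψ : AddChar G ℂ) => ψ ((c : Fin n → G) j))]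
      by_cases hc : c = 0
      · rw [if_pos hc]
        subst hc
        simp [sum_dual_eq, hqdef]
      · rw [if_neg hc]
        obtain ⟨j, hj⟩ : ∃ j, (c : Fin n → G) j ≠ 0 := by
          by_contra hall
          push_neg at hall
          exact hc (Subtype.ext (funext hall))
        refine Finset.prod_eq_zero (Finset.mem_univ j) ?_
        rw [sum_dual_eq, if_neg hj]
    have hDfin : Fintype (dualCodeSet n (C : Set (Fin n → G))) := Fintype.ofFinite _
    have hcount : ∑ π : Fin n → AddChar G ℂ, ∑ c : C, ∏ j, π j ((c : Fin n → G) j)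
        = (Nat.card (dualCodeSet n (C : Set (Fin n → G))) : ℂ) * (q : ℂ) ^ k := by
      rw [Finset.sum_congr rfl fun π _ => hinner π]
      rw [← Finset.sum_filter, Finset.sum_const, nsmul_eq_mul]
      congr 2
      have hc1 : Nat.card (dualCodeSet n (C : Set (Fin n → G)))
          = Nat.card {π : Fin n → AddChar G ℂ // π ∈ D} := rfl
      rw [hc1, Nat.card_eq_fintype_card]
      convert (Fintype.card_subtype (fun π => π ∈ D)).symm using 2
    have hcount2 : ∑ π : Fin n → AddChar G ℂ, ∑ c : C, ∏ j, π j ((c : Fin n → G) j)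
        = (q : ℂ) ^ n := by
      rw [Finset.sum_comm]
      rw [Finset.sum_congr rfl fun c _ => houter c]
      rw [Fintype.sum_ite_eq' (0 : C) (fun _ => (q : ℂ) ^ n)]
    have hfinal : (Nat.card (dualCodeSet n (C : Set (Fin n → G))) : ℂ) = (q : ℂ) ^ (n - k) := by
      have hsplit : (q : ℂ) ^ n = (q : ℂ) ^ (n - k) * (q : ℂ) ^ k := by
        rw [← pow_add]
        congr 1
        omega
      have := hcount.symm.trans hcount2
      rw [hsplit] at this
      exact mul_right_cancel₀ (pow_ne_zero k hq0) this
    exact_mod_cast hfinal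
  -- Step 4: projection of the dual onto any n - k coordinates is bijective
  haveI hDfin' : Fintype {π : Fin n → AddChar G ℂ // π ∈ D} := Fintype.ofFinite _
  have hDcard' : Nat.card {π : Fin n → AddChar G ℂ // π ∈ D} = q ^ (n - k) := hDcard
  have hdualproj : ∀ T : Finset (Fin n), T.card = n - k →
      Surjective (fun (π : {π : Fin n → AddChar G ℂ // π ∈ D}) (j : T)
        => (π : Fin n → AddChar G ℂ) j) := by
    intro T hT
    have hinj : Injective (fun (π : {π : Fin n → AddChar G ℂ // π ∈ D}) (j : T)
        => (π : Fin n → AddChar G ℂ) j) := by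
      intro π π' h
      set σ : Fin n → AddChar G ℂ := π.1 * (π'.1)⁻¹ with hσdef
      have hσD : σ ∈ D := mul_mem π.2 (inv_mem π'.2)
      have hσT : ∀ j ∈ T, σ j = 1 := by
        intro j hj
        have h1 := congrFun h (⟨j, hj⟩ : T)
        simp only at h1
        simp [hσdef, Pi.mul_apply, Pi.inv_apply, h1]
      have hwσ : charWeight σ ≤ k := by
        rw [hcw]
        calc ({j | σ j ≠ 1} : Finset (Fin n)).card ≤ Tᶜ.card := by
              refine Finset.card_le_card fun j hj => ?_
              simp only [mem_filter, mem_univ, true_and] at hj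
              simp only [mem_compl]
              exact fun hjT => hj (hσT j hjT)
          _ ≤ k := by rw [Finset.card_compl, hT]; simp; omega
      have hσ1 : σ = 1 := by
        by_contra hne
        have := hdualLB σ hσD hne
        omega
      apply Subtype.ext
      rwa [hσdef, mul_inv_eq_one] at hσ1
    have hbij : Bijective (fun (π : {π : Fin n → AddChar G ℂ // π ∈ D}) (j : T)
        => (π : Fin n → AddChar G ℂ) j) := by
      rw [Fintype.bijective_iff_injective_and_card]
      refine ⟨hinj, ?_⟩
      rw [← Nat.card_eq_fintype_card, hDcard', Fintype.card_fun, Fintype.card_coe, hT,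
        AddChar.card_eq]
    exact hbij.surjective
  -- pick a nontrivial character of G
  obtain ⟨a, ha⟩ := exists_ne (0 : G)
  obtain ⟨ψ0, hψ0⟩ := (AddChar.exists_apply_ne_zero).2 ha
  have hψ0ne : ψ0 ≠ 1 := AddChar.ne_one_iff.2 ⟨a, hψ0⟩
  -- pick a coordinate set T of size n - k and a special coordinate j0 ∈ T
  obtain ⟨T, -, hTcard⟩ := Finset.exists_subset_card_eq
    (show n - k ≤ (univ : Finset (Fin n)).card by simp)
  have hTne : T.Nonempty := Finset.card_pos.1 (by omega)
  obtain ⟨j0, hj0T⟩ := hTne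
  -- construct the dual word of weight k + 1
  obtain ⟨π, hπx⟩ := hdualproj T hTcard
    (fun j => if (j : Fin n) = j0 then ψ0 else 1)
  have hπT : ∀ j (hj : j ∈ T), π.1 j = if j = j0 then ψ0 else 1 := by
    intro j hj
    exact congrFun hπx (⟨j, hj⟩ : T)
  have hπj0 : π.1 j0 = ψ0 := by rw [hπT j0 hj0T, if_pos rfl]
  have hπne : π.1 ≠ 1 := by
    intro h
    apply hψ0ne
    rw [← hπj0, h]
    rfl
  have hwle : charWeight π.1 ≤ k + 1 := by
    rw [hcw]
    calc ({j | π.1 j ≠ 1} : Finset (Fin n)).card ≤ (Tᶜ ∪ {j0}).card := by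
          refine Finset.card_le_card fun j hj => ?_
          simp only [mem_filter, mem_univ, true_and] at hj
          simp only [mem_union, mem_compl, mem_singleton]
          by_cases hjT : j ∈ T
          · refine Or.inr ?_
            by_contra hne
            exact hj (by rw [hπT j hjT, if_neg hne])
          · exact Or.inl hjT
      _ ≤ Tᶜ.card + 1 := by
          refine le_trans (Finset.card_union_le _ _) ?_
          simp
      _ ≤ k + 1 := by rw [Finset.card_compl, hTcard]; simp; omega
  have hwge : k + 1 ≤ charWeight π.1 := hdualLB π.1 π.2 hπne
  have hweq : charWeight π.1 = k + 1 := le_antisymm hwle hwge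
  refine ⟨hDcard, ⟨⟨π.1, π.2, ?_, hweq⟩, ?_⟩⟩
  · intro h
    exact hπne h
  · rintro w ⟨σ, hσD, hσne, rfl⟩
    exact hdualLB σ hσD hσne
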